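/- The Chebyshev polynomials of the first kind satisfy T_m(1+δ) ≥ (1/2)·e^{m√δ} for all δ ∈ [0, 1/4] and all m ≥ 0. -/
import Mathlib


/- STATEMENT 6: the Chebyshev polynomials of the first kind satisfy
`T_m(1+δ) ≥ (1/2)·e^{m√δ}` for `δ ∈ [0, 1/4]` and all `m ≥ 0`. -/

lemma cheb_eval_aux (x y : ℝ) (hy : y ≠ 0) (hxy : y ^ 2 - 2 * x * y + 1 = 0) :
    ∀ m : ℕ, (Polynomial.Chebyshev.T ℝ (m : ℤ)).eval x = (y ^ m + y⁻¹ ^ m) / 2 := by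
  intro m
  induction m using Nat.twoStepInduction with
  | zero => simp [Polynomial.Chebyshev.T_zero]
  | one =>
    simp only [Nat.cast_one, Polynomial.Chebyshev.T_one, Polynomial.eval_X, pow_one]
    field_simp
    nlinarith [hxy]
  | more n ih1 ih2 =>
    have : ((n : ℤ) + 2) = ((n + 2 : ℕ) : ℤ) := by push_cast; ring
    rw [← this, Polynomial.Chebyshev.T_add_two]
    have this2 : ((n : ℤ) + 1) = ((n + 1 : ℕ) : ℤ) := by push_cast; ring
    rw [this2]
    simp only [Polynomial.eval_sub, Polynomial.eval_mul, Polynomial.eval_ofNat,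
      Polynomial.eval_X, ih1, ih2]
    have hinv : y * y⁻¹ = 1 := mul_inv_cancel₀ hy
    have h2x : 2 * x = y + y⁻¹ := by
      field_simp
      nlinarith [hxy]
    have e1 : y ^ (n + 1) = y ^ n * y := by ring
    have e2 : y ^ (n + 2) = y ^ n * y * y := by ring
    have e3 : y⁻¹ ^ (n + 1) = y⁻¹ ^ n * y⁻¹ := by ring
    have e4 : y⁻¹ ^ (n + 2) = y⁻¹ ^ n * y⁻¹ * y⁻¹ := by ring
    rw [e2, e4, e1, e3]
    have : (2 * x) * ((y ^ n * y + y⁻¹ ^ n * y⁻¹) / 2) - (y ^ n + y⁻¹ ^ n) / 2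
        = (y ^ n * y * y + y⁻¹ ^ n * y⁻¹ * y⁻¹) / 2 := by
      rw [h2x]
      have h1 : y ^ n * (y * y⁻¹) = y ^ n := by rw [hinv]; ring
      have h2 : y⁻¹ ^ n * (y * y⁻¹) = y⁻¹ ^ n := by rw [hinv]; ring
      nlinarith [h1, h2]
    linarith [this]

theorem stmt6 (m : ℕ) (δ : ℝ) (h0 : 0 ≤ δ) (h1 : δ ≤ 1 / 4) :
    (1 / 2) * Real.exp (m * Real.sqrt δ) ≤ (Polynomial.Chebyshev.T ℝ (m : ℤ)).eval (1 + δ) := by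
  set t := Real.sqrt δ with ht
  have ht0 : 0 ≤ t := Real.sqrt_nonneg δ
  have ht2 : t ^ 2 = δ := Real.sq_sqrt h0
  have ht1 : t ≤ 1 := by nlinarith [ht2]
  set x : ℝ := 1 + δ with hx
  set y : ℝ := 1 + δ + Real.sqrt (δ ^ 2 + 2 * δ) with hy
  have hs0 : 0 ≤ Real.sqrt (δ ^ 2 + 2 * δ) := Real.sqrt_nonneg _
  have hs2 : Real.sqrt (δ ^ 2 + 2 * δ) ^ 2 = δ ^ 2 + 2 * δ :=
    Real.sq_sqrt (by nlinarith)
  have hy1 : 1 ≤ y := by rw [hy]; linarith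
  have hy0 : y ≠ 0 := by positivity
  have hroot : y ^ 2 - 2 * x * y + 1 = 0 := by
    rw [hy, hx]; nlinarith [hs2]
  have key := cheb_eval_aux x y hy0 hroot m
  -- exp t ≤ 1 + t + t^2
  have hexp : Real.exp t ≤ 1 + t + t ^ 2 := by
    have := Real.exp_bound' ht0 ht1 (n := 3) (by norm_num)
    have hsum : (∑ i ∈ Finset.range 3, t ^ i / (Nat.factorial i))
        = 1 + t + t ^ 2 / 2 := by
      simp [Finset.sum_range_succ, Nat.factorial]
    rw [hsum] at this
    have : Real.exp t ≤ 1 + t + t ^ 2 / 2 + t ^ 3 * 4 / 18 := by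
      convert this using 2 <;> norm_num [Nat.factorial]
    nlinarith [pow_nonneg ht0 3, sq_nonneg t, pow_le_pow_left₀ ht0 ht1 3]
  -- 1 + t + t^2 ≤ y
  have h1ty : 1 + t + t ^ 2 ≤ y := by
    have hst : t * Real.sqrt 2 ≤ Real.sqrt (δ ^ 2 + 2 * δ) := by
      have : t * Real.sqrt 2 = Real.sqrt (2 * δ) := by
        rw [ht, ← Real.sqrt_mul h0, mul_comm]
      rw [this]
      exact Real.sqrt_le_sqrt (by nlinarith)
    have h2 : (1 : ℝ) ≤ Real.sqrt 2 := by
      rw [show (1:ℝ) = Real.sqrt 1 by simp]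
      exact Real.sqrt_le_sqrt (by norm_num)
    have : t ≤ t * Real.sqrt 2 := by nlinarith
    rw [hy]
    linarith [hst, this, ht2]
  have hey : Real.exp t ≤ y := le_trans hexp h1ty
  -- conclude
  have hpow : Real.exp ((m : ℝ) * t) = (Real.exp t) ^ m := by
    rw [← Real.exp_nat_mul]
  have hym : (Real.exp t) ^ m ≤ y ^ m :=
    pow_le_pow_left₀ (Real.exp_pos t).le hey m
  have hyinv : 0 ≤ y⁻¹ ^ m := by positivity
  rw [key, hpow]
  have : y ^ m ≤ y ^ m + y⁻¹ ^ m := by linarith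
  calc (1 / 2) * Real.exp t ^ m ≤ (1 / 2) * y ^ m := by linarith [hym]
    _ ≤ (y ^ m + y⁻¹ ^ m) / 2 := by linarith
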